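/- Let α, β : ℝⁿ → (0,∞) be C² functions and ε > 0. Setting v = √((α+ε)(β+ε)), one has at every point Lv ≤ (1/(2v))((β+ε)Lα + (α+ε)Lβ) − Σᵢ (1/(4v³))((β+ε)Dᵢα − (α+ε)Dᵢβ)², where L u = Δu − ⟨x, ∇u⟩ is the Ornstein–Uhlenbeck operator. In particular Lv ≤ (1/(2v))((β+ε)Lα + (α+ε)Lβ). -/

import Mathlib

open scoped BigOperators

/-- `i`-th partial derivative. -/
noncomputable def pd (n : ℕ) (i : Fin n) (u : (Fin n → ℝ) → ℝ) : (Fin n → ℝ) → ℝ :=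
  fun x => fderiv ℝ u x (Pi.single i 1)

/-- The Ornstein–Uhlenbeck operator `L u = Δu − ⟨x, ∇u⟩` on `ℝⁿ`. -/
noncomputable def OU (n : ℕ) (u : (Fin n → ℝ) → ℝ) : (Fin n → ℝ) → ℝ :=
  fun x => (∑ i, pd n i (pd n i u) x) - ∑ i, x i * pd n i u x

namespace OUaux

variable {n : ℕ} {f g : (Fin n → ℝ) → ℝ} {x : Fin n → ℝ} {i : Fin n}

lemma pd_contDiff_one (hf : ContDiff ℝ 2 f) (i : Fin n) : ContDiff ℝ 1 (pd n i f) := by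
  have h := hf.fderiv_right (m := 1) (by norm_num)
  exact (ContinuousLinearMap.apply ℝ ℝ (Pi.single i 1 : Fin n → ℝ)).contDiff.comp h

lemma pd_mul (hf : DifferentiableAt ℝ f x) (hg : DifferentiableAt ℝ g x) :
    pd n i (fun y => f y * g y) x = pd n i f x * g x + f x * pd n i g x := by
  simp [pd, fderiv_fun_mul hf hg]; ring

lemma pd_add (hf : DifferentiableAt ℝ f x) (hg : DifferentiableAt ℝ g x) :
    pd n i (fun y => f y + g y) x = pd n i f x + pd n i g x := by
  simp [pd, fderiv_fun_add hf hg]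

lemma pd_add_const (c : ℝ) :
    pd n i (fun y => f y + c) x = pd n i f x := by
  simp [pd, fderiv_add_const]

lemma pd_sqrt (hf : DifferentiableAt ℝ f x) (hfx : f x ≠ 0) :
    pd n i (fun y => Real.sqrt (f y)) x = (2 * Real.sqrt (f x))⁻¹ * pd n i f x := by
  have h : HasFDerivAt (fun y => Real.sqrt (f y))
      ((1 / (2 * Real.sqrt (f x))) • fderiv ℝ f x) x :=
    (Real.hasDerivAt_sqrt hfx).comp_hasFDerivAt x hf.hasFDerivAt
  simp [pd, h.fderiv]
  try ring

lemma diff_inv_two_sqrt (hf : DifferentiableAt ℝ f x) (hfx : 0 < f x) :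
    DifferentiableAt ℝ (fun y => (2 * Real.sqrt (f y))⁻¹) x := by
  have hs : 0 < Real.sqrt (f x) := Real.sqrt_pos.2 hfx
  have h : HasFDerivAt (fun y => (2 * Real.sqrt (f y))⁻¹)
      ((-(2 * (1 / (2 * Real.sqrt (f x)))) / (2 * Real.sqrt (f x)) ^ 2) • fderiv ℝ f x) x :=
    (((Real.hasDerivAt_sqrt hfx.ne').const_mul 2).inv (by positivity)).comp_hasFDerivAt
      x hf.hasFDerivAt
  exact h.differentiableAt

lemma pd_inv_two_sqrt (hf : DifferentiableAt ℝ f x) (hfx : 0 < f x) :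
    pd n i (fun y => (2 * Real.sqrt (f y))⁻¹) x
      = -(pd n i f x) / (4 * Real.sqrt (f x) ^ 3) := by
  have hs : 0 < Real.sqrt (f x) := Real.sqrt_pos.2 hfx
  have h : HasFDerivAt (fun y => (2 * Real.sqrt (f y))⁻¹)
      ((-(2 * (1 / (2 * Real.sqrt (f x)))) / (2 * Real.sqrt (f x)) ^ 2) • fderiv ℝ f x) x :=
    (((Real.hasDerivAt_sqrt hfx.ne').const_mul 2).inv (by positivity)).comp_hasFDerivAt
      x hf.hasFDerivAt
  simp only [pd, h.fderiv, ContinuousLinearMap.coe_smul', Pi.smul_apply, smul_eq_mul]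
  field_simp
  ring

lemma alg (s A B A1 B1 A2 B2 X : ℝ) (hs : 0 < s) (h2 : s ^ 2 = A * B) :
    (-(B * A1 + A * B1) / (4 * s ^ 3) * (B * A1 + A * B1)
        + (2 * s)⁻¹ * ((B1 * A1 + B * A2) + (A1 * B1 + A * B2)))
      - X * ((2 * s)⁻¹ * (B * A1 + A * B1))
    = (1 / (2 * s)) * (B * (A2 - X * A1) + A * (B2 - X * B1))
      - (1 / (4 * s ^ 3)) * (B * A1 - A * B1) ^ 2 := by
  have hs' : s ≠ 0 := hs.ne'
  field_simp
  linear_combination (8 * A1 * B1) * h2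

end OUaux

theorem OU_sqrt_supersolution (n : ℕ) (α β : (Fin n → ℝ) → ℝ)
    (hα : ContDiff ℝ 2 α) (hβ : ContDiff ℝ 2 β)
    (hαpos : ∀ x, 0 < α x) (hβpos : ∀ x, 0 < β x)
    (ε : ℝ) (hε : 0 < ε)
    (v : (Fin n → ℝ) → ℝ) (hv : v = fun x => Real.sqrt ((α x + ε) * (β x + ε))) :
    ∀ x : Fin n → ℝ,
      OU n v x ≤ (1 / (2 * v x)) * ((β x + ε) * OU n α x + (α x + ε) * OU n β x)
          - ∑ i, (1 / (4 * v x ^ 3)) *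
              ((β x + ε) * pd n i α x - (α x + ε) * pd n i β x) ^ 2 ∧
      OU n v x ≤ (1 / (2 * v x)) * ((β x + ε) * OU n α x + (α x + ε) * OU n β x) := by
  open OUaux in
  subst hv
  -- basic smoothness facts
  have hA2 : ContDiff ℝ 2 (fun y => α y + ε) := hα.add contDiff_const
  have hB2 : ContDiff ℝ 2 (fun y => β y + ε) := hβ.add contDiff_const
  have hw2 : ContDiff ℝ 2 (fun y => (α y + ε) * (β y + ε)) := hA2.mul hB2
  have hwd : ∀ y, DifferentiableAt ℝ (fun z => (α z + ε) * (β z + ε)) y :=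
    fun y => (hw2.differentiable two_ne_zero).differentiableAt
  have hαd : ∀ y, DifferentiableAt ℝ α y := fun y => (hα.differentiable two_ne_zero).differentiableAt
  have hβd : ∀ y, DifferentiableAt ℝ β y := fun y => (hβ.differentiable two_ne_zero).differentiableAt
  have hpdαd : ∀ (i : Fin n) y, DifferentiableAt ℝ (pd n i α) y :=
    fun i y => ((pd_contDiff_one hα i).differentiable one_ne_zero).differentiableAt
  have hpdβd : ∀ (i : Fin n) y, DifferentiableAt ℝ (pd n i β) y :=
    fun i y => ((pd_contDiff_one hβ i).differentiable one_ne_zero).differentiableAt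
  have hpdwd : ∀ (i : Fin n) y, DifferentiableAt ℝ (pd n i (fun z => (α z + ε) * (β z + ε))) y :=
    fun i y => ((pd_contDiff_one hw2 i).differentiable one_ne_zero).differentiableAt
  have hwpos : ∀ y, 0 < (α y + ε) * (β y + ε) :=
    fun y => mul_pos (by linarith [hαpos y]) (by linarith [hβpos y])
  -- first derivative of w
  have hpdw : ∀ (i : Fin n) y, pd n i (fun z => (α z + ε) * (β z + ε)) y
      = (β y + ε) * pd n i α y + (α y + ε) * pd n i β y := by
    intro i y
    have e1 : pd n i (fun z => (α z + ε) * (β z + ε)) y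
        = pd n i (fun z => α z + ε) y * (β y + ε) + (α y + ε) * pd n i (fun z => β z + ε) y :=
      pd_mul ((hαd y).add_const ε) ((hβd y).add_const ε)
    have e2 : pd n i (fun z => α z + ε) y = pd n i α y := pd_add_const ε
    have e3 : pd n i (fun z => β z + ε) y = pd n i β y := pd_add_const ε
    rw [e1, e2, e3]; ring
  -- first derivative of v
  have hpdv : ∀ (i : Fin n) y, pd n i (fun z => Real.sqrt ((α z + ε) * (β z + ε))) y
      = (2 * Real.sqrt ((α y + ε) * (β y + ε)))⁻¹ * pd n i (fun z => (α z + ε) * (β z + ε)) y :=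
    fun i y => pd_sqrt (hwd y) (hwpos y).ne'
  intro x
  set s : ℝ := Real.sqrt ((α x + ε) * (β x + ε)) with hs_def
  have hs : 0 < s := Real.sqrt_pos.2 (hwpos x)
  have hs2 : s ^ 2 = (α x + ε) * (β x + ε) := Real.sq_sqrt (hwpos x).le
  -- second derivative of w at x
  have hpd2w : ∀ i : Fin n, pd n i (pd n i (fun z => (α z + ε) * (β z + ε))) x
      = (pd n i β x * pd n i α x + (β x + ε) * pd n i (pd n i α) x)
        + (pd n i α x * pd n i β x + (α x + ε) * pd n i (pd n i β) x) := by
    intro i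
    have hfun : pd n i (fun z => (α z + ε) * (β z + ε))
        = fun y => (β y + ε) * pd n i α y + (α y + ε) * pd n i β y := funext (hpdw i)
    rw [hfun]
    have e1 : pd n i (fun y => (β y + ε) * pd n i α y + (α y + ε) * pd n i β y) x
        = pd n i (fun y => (β y + ε) * pd n i α y) x + pd n i (fun y => (α y + ε) * pd n i β y) x :=
      pd_add (((hβd x).add_const ε).mul (hpdαd i x)) (((hαd x).add_const ε).mul (hpdβd i x))
    have e2 : pd n i (fun y => (β y + ε) * pd n i α y) x
        = pd n i (fun y => β y + ε) x * pd n i α x + (β x + ε) * pd n i (pd n i α) x :=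
      pd_mul ((hβd x).add_const ε) (hpdαd i x)
    have e3 : pd n i (fun y => (α y + ε) * pd n i β y) x
        = pd n i (fun y => α y + ε) x * pd n i β x + (α x + ε) * pd n i (pd n i β) x :=
      pd_mul ((hαd x).add_const ε) (hpdβd i x)
    have e4 : pd n i (fun y => β y + ε) x = pd n i β x := pd_add_const ε
    have e5 : pd n i (fun y => α y + ε) x = pd n i α x := pd_add_const ε
    rw [e1, e2, e3, e4, e5]
  -- second derivative of v at x
  have hpd2v : ∀ i : Fin n, pd n i (pd n i (fun z => Real.sqrt ((α z + ε) * (β z + ε)))) x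
      = (-(((β x + ε) * pd n i α x + (α x + ε) * pd n i β x)) / (4 * s ^ 3))
          * ((β x + ε) * pd n i α x + (α x + ε) * pd n i β x)
        + (2 * s)⁻¹ * ((pd n i β x * pd n i α x + (β x + ε) * pd n i (pd n i α) x)
            + (pd n i α x * pd n i β x + (α x + ε) * pd n i (pd n i β) x)) := by
    intro i
    have hfun : pd n i (fun z => Real.sqrt ((α z + ε) * (β z + ε)))
        = fun y => (2 * Real.sqrt ((α y + ε) * (β y + ε)))⁻¹
            * pd n i (fun z => (α z + ε) * (β z + ε)) y := funext (hpdv i)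
    rw [hfun]
    have e1 : pd n i (fun y => (2 * Real.sqrt ((α y + ε) * (β y + ε)))⁻¹
          * pd n i (fun z => (α z + ε) * (β z + ε)) y) x
        = pd n i (fun y => (2 * Real.sqrt ((α y + ε) * (β y + ε)))⁻¹) x
            * pd n i (fun z => (α z + ε) * (β z + ε)) x
          + (2 * Real.sqrt ((α x + ε) * (β x + ε)))⁻¹
            * pd n i (pd n i (fun z => (α z + ε) * (β z + ε))) x :=
      pd_mul (diff_inv_two_sqrt (hwd x) (hwpos x)) (hpdwd i x)
    have e2 : pd n i (fun y => (2 * Real.sqrt ((α y + ε) * (β y + ε)))⁻¹) x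
        = -(pd n i (fun z => (α z + ε) * (β z + ε)) x) / (4 * Real.sqrt ((α x + ε) * (β x + ε)) ^ 3) :=
      pd_inv_two_sqrt (hwd x) (hwpos x)
    rw [e1, e2, hpd2w i, hpdw i x]
  -- key exact identity
  have key : OU n (fun z => Real.sqrt ((α z + ε) * (β z + ε))) x
      = (1 / (2 * s)) * ((β x + ε) * OU n α x + (α x + ε) * OU n β x)
        - ∑ i, (1 / (4 * s ^ 3)) *
            ((β x + ε) * pd n i α x - (α x + ε) * pd n i β x) ^ 2 := by
    simp only [OU]
    rw [← Finset.sum_sub_distrib]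
    have hterm : ∀ i ∈ (Finset.univ : Finset (Fin n)),
        pd n i (pd n i (fun z => Real.sqrt ((α z + ε) * (β z + ε)))) x
          - x i * pd n i (fun z => Real.sqrt ((α z + ε) * (β z + ε))) x
        = (1 / (2 * s)) * ((β x + ε) * (pd n i (pd n i α) x - x i * pd n i α x)
              + (α x + ε) * (pd n i (pd n i β) x - x i * pd n i β x))
          - (1 / (4 * s ^ 3)) * ((β x + ε) * pd n i α x - (α x + ε) * pd n i β x) ^ 2 := by
      intro i _
      rw [hpd2v i, hpdv i x, hpdw i x]
      exact alg s (α x + ε) (β x + ε) (pd n i α x) (pd n i β x)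
        (pd n i (pd n i α) x) (pd n i (pd n i β) x) (x i) hs hs2
    rw [Finset.sum_congr rfl hterm]
    rw [Finset.sum_sub_distrib]
    congr 1
    rw [← Finset.mul_sum]
    congr 1
    rw [Finset.sum_add_distrib, ← Finset.mul_sum, ← Finset.mul_sum,
      Finset.sum_sub_distrib, Finset.sum_sub_distrib]
  constructor
  · exact le_of_eq key
  · rw [key]
    have : (0:ℝ) ≤ ∑ i, (1 / (4 * s ^ 3)) *
        ((β x + ε) * pd n i α x - (α x + ε) * pd n i β x) ^ 2 :=
      Finset.sum_nonneg fun i _ => by positivity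
    linarith
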